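/- The maps j and j' of the preceding construction (j(Z)(U,V) = (Z×U, Z×V) on ℝ³×ℝ³ and j'(Z)(U,V) = (ZU, 0) on ℍ×ℝ²) are isospectral: for each Z ∈ ℝ³ ≅ Im ℍ, both j(Z) and j'(Z) have eigenvalues ±√(3/2)‖Z‖·i and 0, each with multiplicity 2 (equivalently, equal characteristic polynomials x²(x² + (3/2)‖Z‖²)²). -/

import Mathlib

open scoped Quaternion
open Polynomial

private lemma cross_charpoly' (Z : Fin 3 → ℝ) :
    (crossProduct Z).charpoly = X * (X ^ 2 + C (Z 0 ^2 + Z 1 ^2 + Z 2 ^2)) := by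
  rw [← LinearMap.charpoly_toMatrix (crossProduct Z) (Pi.basisFun ℝ (Fin 3))]
  have : LinearMap.toMatrix (Pi.basisFun ℝ (Fin 3)) (Pi.basisFun ℝ (Fin 3)) (crossProduct Z)
      = !![0, -Z 2, Z 1; Z 2, 0, -Z 0; -Z 1, Z 0, 0] := by
    ext i j
    rw [LinearMap.toMatrix_apply]
    fin_cases i <;> fin_cases j <;>
      simp [crossProduct, Pi.basisFun_apply, Pi.single]
  rw [this, Matrix.charpoly, Matrix.det_fin_three]
  simp [Matrix.charmatrix_apply, Matrix.one_apply]
  ring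

private lemma quat_charpoly' (Zq : ℍ[ℝ]) (h : Zq.re = 0) :
    (LinearMap.mulLeft ℝ Zq).charpoly
      = (X ^ 2 + C (Zq.imI ^2 + Zq.imJ ^2 + Zq.imK ^2)) ^ 2 := by
  set a := Zq.imI; set b := Zq.imJ; set c := Zq.imK
  refine (LinearEquiv.charpoly_conj (QuaternionAlgebra.linearEquivTuple (-1:ℝ) 0 (-1))
    (LinearMap.mulLeft ℝ Zq)).symm.trans ?_
  rw [← LinearMap.charpoly_toMatrix _ (Pi.basisFun ℝ (Fin 4))]
  suffices key : ∀ M : Matrix (Fin 4) (Fin 4) ℝ,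
      M = !![0, -a, -b, -c; a, 0, -c, b; b, c, 0, -a; c, -b, a, 0] →
      M.charpoly = (X ^ 2 + C (a ^2 + b ^2 + c ^2)) ^ 2 by
    refine key _ ?_
    have hm : ∀ y : ℍ[ℝ], Zq * y = ⟨Zq.re * y.re - Zq.imI * y.imI - Zq.imJ * y.imJ - Zq.imK * y.imK,
        Zq.re * y.imI + Zq.imI * y.re + Zq.imJ * y.imK - Zq.imK * y.imJ,
        Zq.re * y.imJ - Zq.imI * y.imK + Zq.imJ * y.re + Zq.imK * y.imI,
        Zq.re * y.imK + Zq.imI * y.imJ - Zq.imJ * y.imI + Zq.imK * y.re⟩ := fun y => by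
      ext <;> simp [Quaternion.re_mul, Quaternion.imI_mul, Quaternion.imJ_mul, Quaternion.imK_mul]
    ext i j
    rw [LinearMap.toMatrix_apply]
    fin_cases i <;> fin_cases j <;>
      simp [LinearEquiv.conj_apply_apply, QuaternionAlgebra.coe_linearEquivTuple,
        QuaternionAlgebra.coe_linearEquivTuple_symm, LinearMap.mulLeft, AddMonoidHom.mulLeft,
        QuaternionAlgebra.equivTuple, Pi.basisFun_apply, Pi.single, Function.update, h] <;>
      erw [hm] <;> simp [h, a, b, c]
  rintro M rfl
  rw [Matrix.charpoly]
  rw [show (!![0, -a, -b, -c; a, 0, -c, b; b, c, 0, -a; c, -b, a, 0]).charmatrix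
    = !![X, C a, C b, C c; -C a, X, C c, -C b; -C b, -C c, X, C a; -C c, C b, -C a, X] by
      ext i j; fin_cases i <;> fin_cases j <;> simp [Matrix.charmatrix_apply, Matrix.one_apply]]
  rw [Matrix.det_succ_row_zero]
  simp [Matrix.det_succ_row_zero, Fin.sum_univ_succ, Matrix.submatrix, Fin.succAbove]
  ring

private lemma zero_charpoly' :
    (0 : (Fin 2 → ℝ) →ₗ[ℝ] (Fin 2 → ℝ)).charpoly = X ^ 2 := by
  rw [← LinearMap.charpoly_toMatrix _ (Pi.basisFun ℝ (Fin 2)), map_zero,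
    Matrix.charpoly, Matrix.det_fin_two]
  simp [Matrix.charmatrix_apply, Matrix.one_apply]
  ring



/-- The maps j(Z)(U,V) = (Z×U, Z×V) on ℝ³×ℝ³ and
j'(Z)(U,V) = (ZU, 0) on ℍ×ℝ² are isospectral: for each Z (with corresponding
purely imaginary quaternion Zq) both have characteristic polynomial
x²(x² + (3/2)‖Z‖²)², i.e. eigenvalues ±√(3/2)‖Z‖·i and 0, each with
multiplicity 2, where ‖Z‖ is the norm of the inner product ⟨Z,W⟩ = (2/3)(Z,W). -/
theorem stmt_11 (Z : Fin 3 → ℝ)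
    (Zq : ℍ[ℝ]) (hZq : Zq.re = 0 ∧ Zq.imI = Z 0 ∧ Zq.imJ = Z 1 ∧ Zq.imK = Z 2)
    (J : ((Fin 3 → ℝ) × (Fin 3 → ℝ)) →ₗ[ℝ] ((Fin 3 → ℝ) × (Fin 3 → ℝ)))
    (hJ : ∀ U, J U = (crossProduct Z U.1, crossProduct Z U.2))
    (J' : (ℍ[ℝ] × (Fin 2 → ℝ)) →ₗ[ℝ] (ℍ[ℝ] × (Fin 2 → ℝ)))
    (hJ' : ∀ U, J' U = (Zq * U.1, 0)) :
    J.charpoly = J'.charpoly ∧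
    J.charpoly = Polynomial.X ^ 2 *
      (Polynomial.X ^ 2 +
        Polynomial.C ((3/2) * Real.sqrt ((2/3) * ∑ i, Z i * Z i) ^ 2)) ^ 2 := by
  obtain ⟨h0, h1, h2, h3⟩ := hZq
  have hJe : J = (crossProduct Z).prodMap (crossProduct Z) := by
    ext u <;> simp [hJ]
  have hJ'e : J' = (LinearMap.mulLeft ℝ Zq).prodMap
      (0 : (Fin 2 → ℝ) →ₗ[ℝ] (Fin 2 → ℝ)) := by
    ext u <;> simp [hJ']
  have hs : (3/2 : ℝ) * Real.sqrt ((2/3) * ∑ i, Z i * Z i) ^ 2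
      = Z 0 ^2 + Z 1 ^2 + Z 2 ^2 := by
    rw [Real.sq_sqrt (mul_nonneg (by norm_num) (Finset.sum_nonneg fun i _ => mul_self_nonneg (Z i)))]
    rw [Fin.sum_univ_three]
    ring
  rw [hJe, hJ'e, LinearMap.charpoly_prodMap, LinearMap.charpoly_prodMap,
    cross_charpoly', quat_charpoly' Zq h0, zero_charpoly', hs, h1, h2, h3]
  constructor <;> ring
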